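/- Let (ξ_1, …, ξ_n) be a symmetrically exchangeable tuple of random vectors in ℝ^d with partial sums S_k = ξ_1 + ⋯ + ξ_k, and let A : ℝ^n → ℝ^d be the random linear map sending the k-th standard basis vector e_k to ξ_k. Let C̄ = {x ∈ ℝ^n : 0 ≤ x_1 ≤ x_2 ≤ ⋯ ≤ x_n} be the closed Weyl chamber of type B_n. Then for every signed permutation g of ℝ^n (i.e., every orthogonal map g with g e_k = ε_k e_{σ(k)} for some permutation σ and signs ε_k ∈ {−1,+1}), one has P[0 ∈ Conv(S_1, …, S_n)] = P[ker A ∩ g(C̄) ≠ {0}]. -/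

import Mathlib

open MeasureTheory ProbabilityTheory Finset
open scoped ENNReal

/-- The closed Weyl chamber of type `B_n`: `{x : 0 ≤ x_1 ≤ x_2 ≤ ⋯ ≤ x_n}`. -/
def closedWeylChamberB (n : ℕ) : Set (Fin n → ℝ) :=
  {x | (∀ i, 0 ≤ x i) ∧ Monotone x}

section Aux

/-- Interchanging a triangular double sum over `Fin n`. -/
lemma sum_triangle' {M : Type*} [AddCommMonoid M] {n : ℕ} (f : Fin n → Fin n → M) :
    ∑ k : Fin n, ∑ i ∈ Finset.Iic k, f i k = ∑ i : Fin n, ∑ k ∈ Finset.Ici i, f i k := by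
  refine Finset.sum_comm' ?_
  intro k i
  simp [Finset.mem_Iic, Finset.mem_Ici]

/-- The key deterministic equivalence: `0` lies in the convex hull of the partial sums iff
some nonzero, nonnegative, antitone coefficient vector annihilates the increments. -/
lemma key_iff (n d : ℕ) (y : Fin n → EuclideanSpace ℝ (Fin d)) :
    ((0 : EuclideanSpace ℝ (Fin d)) ∈
      convexHull ℝ (Set.range fun k => ∑ i ∈ Finset.Iic k, y i)) ↔
    ∃ x : Fin n → ℝ, x ≠ 0 ∧ ((∀ i, 0 ≤ x i) ∧ Antitone x) ∧ ∑ k, x k • y k = 0 := by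
  constructor
  · intro h
    rw [_root_.convexHull_eq] at h
    obtain ⟨ι, t, w, z, hw₀, hw₁, hz, hcm⟩ := h
    have hk : ∀ i ∈ t, ∃ m : Fin n, (∑ j ∈ Finset.Iic m, y j) = z i := by
      intro i hi
      obtain ⟨m, hm⟩ := hz i hi
      exact ⟨m, hm⟩
    have ht : t.Nonempty := by
      rcases t.eq_empty_or_nonempty with h | h
      · simp [h] at hw₁
      · exact h
    obtain ⟨i₀, hi₀⟩ := ht
    obtain ⟨m₀, _⟩ := hk i₀ hi₀
    have : Inhabited (Fin n) := ⟨m₀⟩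
    classical
    set k : ι → Fin n := fun i =>
      if h : ∃ m : Fin n, (∑ j ∈ Finset.Iic m, y j) = z i then h.choose else default with hkdef
    have hkz : ∀ i ∈ t, (∑ j ∈ Finset.Iic (k i), y j) = z i := by
      intro i hi
      have h := hk i hi
      simp only [hkdef, dif_pos h]
      exact h.choose_spec
    set v : Fin n → ℝ := fun m => ∑ i ∈ t.filter (fun i => k i = m), w i with hv
    have hv0 : ∀ m, 0 ≤ v m := fun m =>
      Finset.sum_nonneg fun i hi => hw₀ i (Finset.mem_filter.mp hi).1
    have hvsum : ∑ m, v m = 1 := by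
      rw [hv, Finset.sum_fiberwise_of_maps_to (fun i _ => Finset.mem_univ (k i))]
      exact hw₁
    set x : Fin n → ℝ := fun m => ∑ j ∈ Finset.Ici m, v j with hx
    have hx0 : ∀ m, 0 ≤ x m := fun m => Finset.sum_nonneg fun j _ => hv0 j
    have hxa : Antitone x := by
      intro a b hab
      exact Finset.sum_le_sum_of_subset_of_nonneg
        (Finset.Ici_subset_Ici.mpr hab) (fun j _ _ => hv0 j)
    have hxne : x ≠ 0 := by
      have : ∃ j, v j ≠ 0 := by
        by_contra hc
        push_neg at hc
        simp [hc] at hvsum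
      obtain ⟨j, hj⟩ := this
      intro hx0'
      have h1 : v j ≤ x j := Finset.single_le_sum (fun i _ => hv0 i) (Finset.mem_Ici.mpr le_rfl)
      have : x j = 0 := by rw [hx0']; rfl
      have := lt_of_le_of_ne (hv0 j) (Ne.symm hj)
      linarith [h1, this]
    refine ⟨x, hxne, ⟨hx0, hxa⟩, ?_⟩
    have step1 : ∑ m, x m • y m = ∑ j, v j • ∑ m ∈ Finset.Iic j, y m := by
      calc ∑ m, x m • y m = ∑ m, ∑ j ∈ Finset.Ici m, v j • y m := by
            simp only [hx, Finset.sum_smul]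
        _ = ∑ j : Fin n, ∑ m ∈ Finset.Iic j, v j • y m := (sum_triangle' fun m j => v j • y m).symm
        _ = ∑ j, v j • ∑ m ∈ Finset.Iic j, y m := by
            simp [Finset.smul_sum]
    have step2 : ∑ j, v j • (∑ m ∈ Finset.Iic j, y m) = ∑ i ∈ t, w i • z i := by
      rw [hv]
      rw [← Finset.sum_fiberwise_of_maps_to (fun i _ => Finset.mem_univ (k i))
        (fun i => w i • z i)]
      refine Finset.sum_congr rfl fun m _ => ?_
      rw [Finset.sum_smul]
      refine Finset.sum_congr rfl fun i hi => ?_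
      obtain ⟨hit, hki⟩ := Finset.mem_filter.mp hi
      rw [← hkz i hit, hki]
    rw [step1, step2, ← Finset.centerMass_eq_of_sum_1 _ _ hw₁, hcm]
  · rintro ⟨x, hxne, ⟨hx0, hxa⟩, hsum⟩
    classical
    set xb : ℕ → ℝ := fun m => if h : m < n then x ⟨m, h⟩ else 0 with hxb
    have hxbmono : ∀ m, xb (m + 1) ≤ xb m := by
      intro m
      by_cases h1 : m + 1 < n
      · have h0 : m < n := Nat.lt_of_succ_lt h1
        simp only [hxb, dif_pos h1, dif_pos h0]
        exact hxa (by simp [Fin.le_def])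
      · by_cases h0 : m < n
        · simp only [hxb, dif_neg h1, dif_pos h0]
          exact hx0 _
        · simp [hxb, dif_neg h1, dif_neg h0]
    set w : Fin n → ℝ := fun k => xb k - xb (k + 1) with hw
    have hw0 : ∀ k, 0 ≤ w k := fun k => sub_nonneg.mpr (hxbmono k)
    have hIci : ∀ i : Fin n, ∑ k ∈ Finset.Ici i, w k = x i := by
      intro i
      have h1 : Finset.Ici i = Finset.univ.filter (fun k => i ≤ k) := by
        ext k; simp
      rw [h1, Finset.sum_filter]
      have h2 : ∑ k : Fin n, (if i ≤ k then w k else 0)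
          = ∑ m ∈ Finset.range n, (if (i : ℕ) ≤ m then xb m - xb (m + 1) else 0) := by
        rw [← Fin.sum_univ_eq_sum_range (fun m => if (i : ℕ) ≤ m then xb m - xb (m + 1) else 0) n]
        refine Finset.sum_congr rfl fun k _ => ?_
        by_cases h : i ≤ k
        · rw [if_pos h, if_pos (Fin.le_def.mp h)]
        · rw [if_neg h, if_neg (fun hc => h (Fin.le_def.mpr hc))]
      have h3 : ∑ m ∈ Finset.range n, (if (i : ℕ) ≤ m then xb m - xb (m + 1) else 0)
          = ∑ m ∈ Finset.Ico (i : ℕ) n, (xb m - xb (m + 1)) := by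
        rw [← Finset.sum_filter]
        refine Finset.sum_congr ?_ (fun _ _ => rfl)
        ext m; simp [Finset.mem_Ico, and_comm]
      rw [h2, h3, Finset.sum_Ico_eq_sub _ (le_of_lt i.isLt),
        Finset.sum_range_sub' xb n, Finset.sum_range_sub' xb (i : ℕ)]
      have hn : xb n = 0 := by simp [hxb]
      have hi : xb (i : ℕ) = x i := by simp [hxb, i.isLt]
      rw [hn, hi]; ring
    have hwsum : ∑ k, w k = xb 0 := by
      rw [Fin.sum_univ_eq_sum_range (fun m => xb m - xb (m + 1)) n,
        Finset.sum_range_sub' xb n]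
      simp [hxb]
    have hn0 : 0 < n := by
      rcases Nat.eq_zero_or_pos n with h | h
      · exfalso; apply hxne; subst h; ext i; exact absurd i.isLt (by omega)
      · exact h
    have hxb0pos : 0 < xb 0 := by
      obtain ⟨i, hi⟩ : ∃ i, x i ≠ 0 := by
        by_contra hc
        push_neg at hc
        exact hxne (funext hc)
      have hxi : 0 < x i := lt_of_le_of_ne (hx0 i) (Ne.symm hi)
      have : x i ≤ xb 0 := by
        have : xb 0 = x ⟨0, hn0⟩ := by simp [hxb, hn0]
        rw [this]
        exact hxa (Fin.le_def.mpr (Nat.zero_le _))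
      linarith
    have hws : 0 < ∑ k, w k := by rw [hwsum]; exact hxb0pos
    have hmem := Finset.centerMass_mem_convexHull (Finset.univ (α := Fin n))
      (fun k _ => hw0 k) hws
      (z := fun k => ∑ i ∈ Finset.Iic k, y i)
      (s := Set.range fun k => ∑ i ∈ Finset.Iic k, y i)
      (fun k _ => Set.mem_range_self k)
    have hcm0 : Finset.univ.centerMass w (fun k => ∑ i ∈ Finset.Iic k, y i) = 0 := by
      rw [Finset.centerMass]
      have : ∑ k, w k • ∑ i ∈ Finset.Iic k, y i = ∑ i, x i • y i := by
        calc ∑ k, w k • ∑ i ∈ Finset.Iic k, y i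
            = ∑ k : Fin n, ∑ i ∈ Finset.Iic k, w k • y i := by simp [Finset.smul_sum]
          _ = ∑ i : Fin n, ∑ k ∈ Finset.Ici i, w k • y i := sum_triangle' fun i k => w k • y i
          _ = ∑ i, (∑ k ∈ Finset.Ici i, w k) • y i := by simp [Finset.sum_smul]
          _ = ∑ i, x i • y i := by simp_rw [hIci]
      rw [this, hsum, smul_zero]
    rw [hcm0] at hmem
    exact hmem

/-- The event described by a closed cone of coefficients is closed. -/
lemma isClosed_event (n d : ℕ) (D : Set (Fin n → ℝ)) (hD : IsClosed D)
    (hcone : ∀ (c : ℝ), 0 ≤ c → ∀ x ∈ D, c • x ∈ D) :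
    IsClosed {y : Fin n → EuclideanSpace ℝ (Fin d) | ∃ x, x ≠ 0 ∧ x ∈ D ∧ ∑ k, x k • y k = 0} := by
  have hset : {y : Fin n → EuclideanSpace ℝ (Fin d) | ∃ x, x ≠ 0 ∧ x ∈ D ∧ ∑ k, x k • y k = 0}
      = {y | ∃ x : Fin n → ℝ, ‖x‖ = 1 ∧ x ∈ D ∧ ∑ k, x k • y k = 0} := by
    ext y
    constructor
    · rintro ⟨x, hx0, hxD, hxs⟩
      refine ⟨‖x‖⁻¹ • x, ?_, hcone _ (inv_nonneg.mpr (norm_nonneg x)) x hxD, ?_⟩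
      · rw [norm_smul, norm_inv, norm_norm]
        exact inv_mul_cancel₀ (norm_ne_zero_iff.mpr hx0)
      · have : ∀ k, (‖x‖⁻¹ • x) k • y k = ‖x‖⁻¹ • (x k • y k) := by
          intro k; rw [Pi.smul_apply, smul_assoc]
        simp_rw [this, ← Finset.smul_sum, hxs, smul_zero]
    · rintro ⟨x, hx1, hxD, hxs⟩
      exact ⟨x, norm_ne_zero_iff.mp (by rw [hx1]; norm_num), hxD, hxs⟩
  rw [hset]
  refine IsSeqClosed.isClosed ?_
  intro ym y hym hlim
  choose x hx1 hxD hxs using hym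
  have hK : IsCompact (Metric.sphere (0 : Fin n → ℝ) 1 ∩ D) :=
    (isCompact_sphere 0 1).inter_right hD
  have hxK : ∀ m, x m ∈ Metric.sphere (0 : Fin n → ℝ) 1 ∩ D := fun m =>
    ⟨mem_sphere_zero_iff_norm.mpr (hx1 m), hxD m⟩
  obtain ⟨a, haK, φ, hφ, hconv⟩ := hK.tendsto_subseq hxK
  refine ⟨a, mem_sphere_zero_iff_norm.mp haK.1, haK.2, ?_⟩
  have hylim : Filter.Tendsto (fun m => ym (φ m)) Filter.atTop (nhds y) :=
    hlim.comp hφ.tendsto_atTop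
  have hterm : ∀ k : Fin n, Filter.Tendsto (fun m => (x (φ m)) k • (ym (φ m)) k)
      Filter.atTop (nhds (a k • y k)) := by
    intro k
    have h1 : Filter.Tendsto (fun m => (x (φ m)) k) Filter.atTop (nhds (a k)) :=
      ((continuous_apply k).continuousAt.tendsto).comp hconv
    have h2 : Filter.Tendsto (fun m => (ym (φ m)) k) Filter.atTop (nhds (y k)) :=
      ((continuous_apply k).continuousAt.tendsto).comp hylim
    exact h1.smul h2
  have hsumlim : Filter.Tendsto (fun m => ∑ k, (x (φ m)) k • (ym (φ m)) k)
      Filter.atTop (nhds (∑ k, a k • y k)) :=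
    tendsto_finset_sum _ (fun k _ => hterm k)
  have hzero : (fun m => ∑ k, (x (φ m)) k • (ym (φ m)) k)
      = fun _ => (0 : EuclideanSpace ℝ (Fin d)) := by
    funext m; exact hxs (φ m)
  rw [hzero] at hsumlim
  exact (tendsto_nhds_unique tendsto_const_nhds hsumlim).symm

lemma isClosed_chamber (n : ℕ) : IsClosed (closedWeylChamberB n) := by
  have : closedWeylChamberB n =
      (⋂ i, {x : Fin n → ℝ | 0 ≤ x i}) ∩
      ⋂ i, ⋂ j, ⋂ (_ : i ≤ j), {x : Fin n → ℝ | x i ≤ x j} := by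
    ext x
    simp only [closedWeylChamberB, Set.mem_setOf_eq, Set.mem_inter_iff, Set.mem_iInter]
    exact ⟨fun ⟨h1, h2⟩ => ⟨h1, fun i j hij => h2 hij⟩,
      fun ⟨h1, h2⟩ => ⟨h1, fun i j hij => h2 i j hij⟩⟩
  rw [this]
  refine IsClosed.inter (isClosed_iInter fun i => ?_)
    (isClosed_iInter fun i => isClosed_iInter fun j => isClosed_iInter fun _ => ?_)
  · exact isClosed_le continuous_const (continuous_apply i)
  · exact isClosed_le (continuous_apply i) (continuous_apply j)

lemma chamber_cone (n : ℕ) (c : ℝ) (hc : 0 ≤ c) (u : Fin n → ℝ)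
    (hu : u ∈ closedWeylChamberB n) : c • u ∈ closedWeylChamberB n := by
  refine ⟨fun i => mul_nonneg hc (hu.1 i), fun a b hab => ?_⟩
  exact mul_le_mul_of_nonneg_left (hu.2 hab) hc

lemma zero_mem_chamber (n : ℕ) : (0 : Fin n → ℝ) ∈ closedWeylChamberB n :=
  ⟨fun _ => le_rfl, monotone_const⟩

/-- The image of any set under a signed permutation equals a preimage description. -/
lemma image_sgnPerm (n : ℕ) (σ : Equiv.Perm (Fin n)) (ε : Fin n → ℝ)
    (hε2 : ∀ i, ε i * ε i = 1) (A : Set (Fin n → ℝ)) :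
    ((fun (x : Fin n → ℝ) (j : Fin n) => ε (σ.symm j) * x (σ.symm j)) '' A)
      = {z : Fin n → ℝ | (fun i => ε i * z (σ i)) ∈ A} := by
  ext z
  constructor
  · rintro ⟨u, hu, rfl⟩
    show (fun i => ε i * (ε (σ.symm (σ i)) * u (σ.symm (σ i)))) ∈ A
    have : (fun i => ε i * (ε (σ.symm (σ i)) * u (σ.symm (σ i)))) = u := by
      funext i
      rw [Equiv.symm_apply_apply, ← mul_assoc, hε2, one_mul]
    rw [this]; exact hu
  · intro hz
    refine ⟨fun i => ε i * z (σ i), hz, ?_⟩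
    funext j
    show ε (σ.symm j) * (ε (σ.symm j) * z (σ (σ.symm j))) = z j
    rw [Equiv.apply_symm_apply, ← mul_assoc, hε2, one_mul]

lemma ne_singleton_zero_iff {α : Type*} [Zero α] {U : Set α} (h0 : (0 : α) ∈ U) :
    U ≠ {0} ↔ ∃ x ∈ U, x ≠ 0 := by
  constructor
  · intro hne
    by_contra hc
    push_neg at hc
    exact hne (Set.eq_singleton_iff_unique_mem.mpr ⟨h0, hc⟩)
  · rintro ⟨x, hx, hx0⟩ h
    rw [h] at hx
    exact hx0 hx

end Aux

theorem absorption_eq_kernel_meets_chamber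
    {Ω : Type*} [MeasureSpace Ω] [IsProbabilityMeasure (ℙ : Measure Ω)]
    (n d : ℕ)
    (ξ : Fin n → Ω → EuclideanSpace ℝ (Fin d))
    (hmeas : ∀ i, Measurable (ξ i))
    (hsymmexch : ∀ (σ : Equiv.Perm (Fin n)) (ε : Fin n → ℝ),
      (∀ i, ε i = 1 ∨ ε i = -1) →
      Measure.map (fun ω i => ξ i ω) ℙ
        = Measure.map (fun ω i => ε i • ξ (σ i) ω) ℙ)
    (S : Fin n → Ω → EuclideanSpace ℝ (Fin d))
    (hS : ∀ k ω, S k ω = ∑ i ∈ Finset.Iic k, ξ i ω)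
    (σ : Equiv.Perm (Fin n)) (ε : Fin n → ℝ) (hε : ∀ i, ε i = 1 ∨ ε i = -1) :
    ℙ {ω | (0 : EuclideanSpace ℝ (Fin d)) ∈
        convexHull ℝ (Set.range fun k => S k ω)}
      = ℙ {ω | {x : Fin n → ℝ | ∑ k, x k • ξ k ω = 0}
            ∩ ((fun (x : Fin n → ℝ) (j : Fin n) => ε (σ.symm j) * x (σ.symm j)) ''
                closedWeylChamberB n)
          ≠ {0}} := by
  classical
  have hε2 : ∀ i, ε i * ε i = 1 := by
    intro i; rcases hε i with h | h <;> rw [h] <;> norm_num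
  set g : (Fin n → ℝ) → (Fin n → ℝ) :=
    fun x j => ε (σ.symm j) * x (σ.symm j) with hg
  set Dg : Set (Fin n → ℝ) := g '' closedWeylChamberB n with hDg
  have hDgchar : Dg = {z : Fin n → ℝ | (fun i => ε i * z (σ i)) ∈ closedWeylChamberB n} :=
    image_sgnPerm n σ ε hε2 _
  have hDgclosed : IsClosed Dg := by
    rw [hDgchar]
    exact (isClosed_chamber n).preimage
      (continuous_pi fun i => continuous_const.mul (continuous_apply (σ i)))
  have hDgcone : ∀ (c : ℝ), 0 ≤ c → ∀ x ∈ Dg, c • x ∈ Dg := by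
    intro c hc x hx
    rw [hDgchar] at hx ⊢
    have hfeq : (fun i => ε i * (c • x) (σ i)) = c • fun i => ε i * x (σ i) := by
      funext i
      simp only [Pi.smul_apply, smul_eq_mul]
      ring
    rw [Set.mem_setOf_eq, hfeq]
    exact chamber_cone n c hc _ hx
  have hDg0 : (0 : Fin n → ℝ) ∈ Dg := by
    rw [hDgchar]
    have hfeq : (fun i => ε i * (0 : Fin n → ℝ) (σ i)) = (0 : Fin n → ℝ) := by
      funext i; simp
    rw [Set.mem_setOf_eq, hfeq]
    exact zero_mem_chamber n
  set B : Set (Fin n → EuclideanSpace ℝ (Fin d)) :=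
    {y | ∃ x, x ≠ 0 ∧ x ∈ Dg ∧ ∑ k, x k • y k = 0} with hB
  have hBmeas : MeasurableSet B :=
    (isClosed_event n d Dg hDgclosed hDgcone).measurableSet
  set B₀ : Set (Fin n → EuclideanSpace ℝ (Fin d)) :=
    {y | ∃ x : Fin n → ℝ, x ≠ 0 ∧ ((∀ i, 0 ≤ x i) ∧ Antitone x) ∧ ∑ k, x k • y k = 0} with hB₀
  set Y : Ω → (Fin n → EuclideanSpace ℝ (Fin d)) := fun ω i => ξ i ω with hY
  set σ' : Equiv.Perm (Fin n) := σ.symm.trans Fin.revPerm with hσ'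
  set ε' : Fin n → ℝ := fun i => ε (σ.symm i) with hε'
  set Y' : Ω → (Fin n → EuclideanSpace ℝ (Fin d)) := fun ω i => ε' i • ξ (σ' i) ω with hY'
  have hYmeas : Measurable Y := measurable_pi_iff.mpr fun i => hmeas i
  have hY'meas : Measurable Y' :=
    measurable_pi_iff.mpr fun i => (hmeas (σ' i)).const_smul (ε' i)
  -- Step 1: RHS event is `Y ⁻¹' B`.
  have hRHS : {ω | {x : Fin n → ℝ | ∑ k, x k • ξ k ω = 0} ∩ Dg ≠ {0}} = Y ⁻¹' B := by
    ext ω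
    have h0mem : (0 : Fin n → ℝ) ∈ {x : Fin n → ℝ | ∑ k, x k • ξ k ω = 0} ∩ Dg :=
      ⟨by simp, hDg0⟩
    simp only [Set.mem_setOf_eq, Set.mem_preimage, hB, hY]
    rw [ne_singleton_zero_iff h0mem]
    constructor
    · rintro ⟨x, ⟨hx1, hx2⟩, hx0⟩; exact ⟨x, hx0, hx2, hx1⟩
    · rintro ⟨x, hx0, hx2, hx1⟩; exact ⟨x, ⟨hx1, hx2⟩, hx0⟩
  -- Step 2: LHS event is `Y ⁻¹' B₀`.
  have hLHS : {ω | (0 : EuclideanSpace ℝ (Fin d)) ∈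
      convexHull ℝ (Set.range fun k => S k ω)} = Y ⁻¹' B₀ := by
    ext ω
    have hfun : (fun k => S k ω) = fun k => ∑ i ∈ Finset.Iic k, ξ i ω := by
      funext k; exact hS k ω
    simp only [Set.mem_setOf_eq, Set.mem_preimage, hB₀, hY]
    rw [hfun]
    exact key_iff n d (fun i => ξ i ω)
  -- Step 3: exchangeability.
  have hmapped : ℙ (Y' ⁻¹' B) = ℙ (Y ⁻¹' B) := by
    rw [← Measure.map_apply hYmeas hBmeas, ← Measure.map_apply hY'meas hBmeas]
    rw [show Measure.map Y ℙ = Measure.map Y' ℙ from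
      hsymmexch σ' ε' (fun i => hε (σ.symm i))]
  -- Step 4: the pointwise change of variables.
  have hkey : Y' ⁻¹' B = Y ⁻¹' B₀ := by
    ext ω
    simp only [Set.mem_preimage, hB, hB₀, Set.mem_setOf_eq, hY, hY']
    show (∃ x : Fin n → ℝ, x ≠ 0 ∧ x ∈ Dg ∧ ∑ k, x k • (ε' k • ξ (σ' k) ω) = 0) ↔
      (∃ x : Fin n → ℝ, x ≠ 0 ∧ ((∀ i, 0 ≤ x i) ∧ Antitone x) ∧ ∑ k, x k • ξ k ω = 0)
    have hσ'app : ∀ k, σ' k = Fin.rev (σ.symm k) := by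
      intro k; simp [hσ']
    have hsumeq : ∀ u : Fin n → ℝ,
        ∑ k, (g u) k • (ε' k • ξ (σ' k) ω) = ∑ j, u (Fin.rev j) • ξ j ω := by
      intro u
      have h1 : ∀ k : Fin n, (g u) k • (ε' k • ξ (σ' k) ω)
          = u (σ.symm k) • ξ (Fin.rev (σ.symm k)) ω := by
        intro k
        have hgk : (g u) k = ε (σ.symm k) * u (σ.symm k) := rfl
        have hεk : ε' k = ε (σ.symm k) := rfl
        rw [hgk, hεk, hσ'app k, smul_smul]
        congr 1
        rw [mul_comm (ε (σ.symm k)) (u (σ.symm k)), mul_assoc, hε2, mul_one]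
      rw [Finset.sum_congr rfl (fun k _ => h1 k)]
      refine Fintype.sum_equiv (σ.symm.trans Fin.revPerm) _ _ ?_
      intro k
      simp [Fin.rev_rev]
    constructor
    · rintro ⟨x, hx0, hxDg, hxs⟩
      rw [hDg] at hxDg
      obtain ⟨u, huC, rfl⟩ := hxDg
      refine ⟨fun j => u (Fin.rev j), ?_, ⟨fun j => huC.1 _, ?_⟩, ?_⟩
      · intro hz
        apply hx0
        have hu0 : u = 0 := by
          funext i
          have h := congrFun hz (Fin.rev i)
          rwa [Fin.rev_rev] at h
        rw [hu0]
        funext j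
        show ε (σ.symm j) * (0 : Fin n → ℝ) (σ.symm j) = 0
        simp
      · intro a b hab
        exact huC.2 (Fin.rev_le_rev.mpr hab)
      · show ∑ j, u (Fin.rev j) • ξ j ω = 0
        rw [← hsumeq u]
        exact hxs
    · rintro ⟨z, hz0, ⟨hz1, hz2⟩, hzs⟩
      have hmemDg : g (fun i => z (Fin.rev i)) ∈ Dg := by
        rw [hDg]
        exact ⟨fun i => z (Fin.rev i),
          ⟨fun i => hz1 _, fun a b hab => hz2 (Fin.rev_le_rev.mpr hab)⟩, rfl⟩
      refine ⟨g (fun i => z (Fin.rev i)), ?_, hmemDg, ?_⟩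
      · intro hgu
        apply hz0
        funext j
        have h := congrFun hgu (σ (Fin.rev j))
        have h' : ε (σ.symm (σ (Fin.rev j))) * z (Fin.rev (σ.symm (σ (Fin.rev j)))) = 0 := h
        rw [Equiv.symm_apply_apply, Fin.rev_rev] at h'
        have hzj : z j = 0 := by
          rcases hε (Fin.rev j) with h1 | h1 <;> rw [h1] at h' <;> linarith
        simpa using hzj
      · rw [hsumeq (fun i => z (Fin.rev i))]
        show ∑ j, z (Fin.rev (Fin.rev j)) • ξ j ω = 0
        simp_rw [Fin.rev_rev]
        exact hzs
  calc ℙ {ω | (0 : EuclideanSpace ℝ (Fin d)) ∈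
        convexHull ℝ (Set.range fun k => S k ω)}
      = ℙ (Y ⁻¹' B₀) := by rw [hLHS]
    _ = ℙ (Y' ⁻¹' B) := by rw [hkey]
    _ = ℙ (Y ⁻¹' B) := hmapped
    _ = _ := by rw [← hRHS]
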